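/- Let p be a prime and f, g ∈ ℤ_p[x] monic polynomials of degree at least 1 such that the reductions of f and g modulo p generate the unit ideal of (ℤ/pℤ)[x]. Then given r_i, s_i ∈ (ℤ/p^{2^i}ℤ)[x] with r_i·(f mod p^{2^i}) + s_i·(g mod p^{2^i}) = 1, there exist r_{i+1}, s_{i+1} ∈ (ℤ/p^{2^{i+1}}ℤ)[x] with deg(r_{i+1}) < deg(g), deg(s_{i+1}) < deg(f), and r_{i+1}·(f mod p^{2^{i+1}}) + s_{i+1}·(g mod p^{2^{i+1}}) = 1. -/

import Mathlib

open Polynomial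

theorem hensel_bezout_step (p : ℕ) [Fact p.Prime] (f g : Polynomial ℤ_[p])
    (hf : f.Monic) (hg : g.Monic) (hdf : 1 ≤ f.natDegree) (hdg : 1 ≤ g.natDegree)
    (hcop : Ideal.span {f.map (PadicInt.toZMod (p := p)), g.map (PadicInt.toZMod (p := p))} =
      (⊤ : Ideal (Polynomial (ZMod p))))
    (i : ℕ) (r s : Polynomial (ZMod (p ^ 2 ^ i)))
    (hrs : r * f.map (PadicInt.toZModPow (p := p) (2 ^ i)) +
      s * g.map (PadicInt.toZModPow (p := p) (2 ^ i)) = 1) :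
    ∃ r' s' : Polynomial (ZMod (p ^ 2 ^ (i + 1))),
      r'.degree < g.degree ∧ s'.degree < f.degree ∧
      r' * f.map (PadicInt.toZModPow (p := p) (2 ^ (i + 1))) +
        s' * g.map (PadicInt.toZModPow (p := p) (2 ^ (i + 1))) = 1 := by
  clear hrs r s
  set n : ℕ := 2 ^ (i + 1) with hn
  have hp : p.Prime := Fact.out
  have hn0 : n ≠ 0 := by positivity
  haveI : NeZero (p ^ n) := ⟨pow_ne_zero _ hp.ne_zero⟩
  haveI : Fact (1 < p ^ n) := ⟨Nat.one_lt_pow hn0 hp.one_lt⟩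
  set π : ZMod (p ^ n) →+* ZMod p := ZMod.castHom (dvd_pow_self p hn0) (ZMod p) with hπdef
  -- compatibility of reductions
  have hcomp : π.comp (PadicInt.toZModPow (p := p) n) = PadicInt.toZMod := by
    ext x
    have h1 : PadicInt.toZModPow (p := p) n x = ((x.appr n : ℕ) : ZMod (p ^ n)) := rfl
    have h2 : PadicInt.toZMod x = ((x.zmodRepr : ℕ) : ZMod p) := rfl
    rw [RingHom.comp_apply, h1, h2, map_natCast]
    refine PadicInt.zmod_congr_of_sub_mem_max_ideal x _ _ ?_ (PadicInt.sub_zmodRepr_mem x)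
    rw [PadicInt.maximalIdeal_eq_span_p]
    exact Ideal.span_singleton_le_span_singleton.mpr (dvd_pow_self _ hn0)
      (PadicInt.appr_spec n x)
  set F : Polynomial (ZMod (p ^ n)) := f.map (PadicInt.toZModPow (p := p) n) with hF
  set G : Polynomial (ZMod (p ^ n)) := g.map (PadicInt.toZModPow (p := p) n) with hG
  have hFmap : F.map π = f.map (PadicInt.toZMod (p := p)) := by
    rw [hF, Polynomial.map_map, hcomp]
  have hGmap : G.map π = g.map (PadicInt.toZMod (p := p)) := by
    rw [hG, Polynomial.map_map, hcomp]
  -- get a Bézout identity mod p and lift it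
  obtain ⟨a, b, hab⟩ := Ideal.mem_span_pair.mp ((Ideal.eq_top_iff_one _).mp hcop)
  have hπsurj : Function.Surjective π := by
    intro y
    obtain ⟨m, rfl⟩ := ZMod.natCast_zmod_surjective y
    exact ⟨(m : ZMod (p ^ n)), map_natCast π m⟩
  have hsurj : Function.Surjective (Polynomial.map π) :=
    Polynomial.map_surjective π hπsurj
  obtain ⟨A, hA⟩ := hsurj a
  obtain ⟨B, hB⟩ := hsurj b
  -- the error term is nilpotent
  have hnil : IsNilpotent (A * F + B * G - 1) := by
    rw [Polynomial.isNilpotent_iff]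
    intro j
    have hc0 : π ((A * F + B * G - 1).coeff j) = 0 := by
      have : (A * F + B * G - 1).map π = 0 := by
        rw [Polynomial.map_sub, Polynomial.map_add, Polynomial.map_mul, Polynomial.map_mul,
          hA, hB, hFmap, hGmap, Polynomial.map_one, hab, sub_self]
      calc π ((A * F + B * G - 1).coeff j) = ((A * F + B * G - 1).map π).coeff j :=
            (Polynomial.coeff_map π j).symm
        _ = 0 := by rw [this, Polynomial.coeff_zero]
    set x : ZMod (p ^ n) := (A * F + B * G - 1).coeff j
    have hx : x = ((x.val : ℕ) : ZMod (p ^ n)) := (ZMod.natCast_zmod_val x).symm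
    have hdvd : p ∣ x.val := by
      rw [← ZMod.natCast_eq_zero_iff]
      have : π x = ((x.val : ℕ) : ZMod p) := by
        rw [hπdef, ZMod.castHom_apply, ← ZMod.natCast_val]
      rw [← this, hc0]
    obtain ⟨m, hm⟩ := hdvd
    refine ⟨n, ?_⟩
    rw [hx, hm]
    push_cast
    rw [mul_pow, ← Nat.cast_pow, ZMod.natCast_self, zero_mul]
  -- hence A*F + B*G is a unit
  have hu : IsUnit (A * F + B * G) := by
    have := hnil.isUnit_one_add
    rwa [add_sub_cancel] at this
  obtain ⟨u, hu'⟩ := hu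
  have hbez : (↑u⁻¹ * A) * F + (↑u⁻¹ * B) * G = 1 := by
    have : (↑u⁻¹ : Polynomial (ZMod (p ^ n))) * (A * F + B * G) = 1 := by
      rw [← hu', ← Units.val_mul, inv_mul_cancel, Units.val_one]
    rw [← this]; ring
  set R : Polynomial (ZMod (p ^ n)) := ↑u⁻¹ * A with hR
  set S : Polynomial (ZMod (p ^ n)) := ↑u⁻¹ * B with hS
  -- division step
  have hFm : F.Monic := hf.map _
  have hGm : G.Monic := hg.map _
  have hFdeg : F.degree = f.degree := hf.degree_map _
  have hGdeg : G.degree = g.degree := hg.degree_map _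
  set r' : Polynomial (ZMod (p ^ n)) := R %ₘ G with hr'
  set q : Polynomial (ZMod (p ^ n)) := R /ₘ G with hq
  set s' : Polynomial (ZMod (p ^ n)) := S + q * F with hs'
  have hdiv : r' + G * q = R := Polynomial.modByMonic_add_div R G
  have hbez' : r' * F + s' * G = 1 := by
    rw [hs']
    linear_combination hbez + F * hdiv
  have hr'deg : r'.degree < g.degree := by
    rw [← hGdeg]; exact Polynomial.degree_modByMonic_lt R hGm
  refine ⟨r', s', hr'deg, ?_, hbez'⟩
  -- degree bound on s'
  by_contra hcon
  rw [not_lt] at hcon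
  have hfne : f.degree ≠ ⊥ := by
    rw [Ne, Polynomial.degree_eq_bot]; exact hf.ne_zero
  have hfdeg1 : (1 : WithBot ℕ) ≤ f.degree := by
    rw [Polynomial.degree_eq_natDegree hf.ne_zero]
    exact_mod_cast hdf
  have hgdeg1 : (1 : WithBot ℕ) ≤ g.degree := by
    rw [Polynomial.degree_eq_natDegree hg.ne_zero]
    exact_mod_cast hdg
  have hkey : f.degree + g.degree ≤ (s' * G).degree := by
    rw [hGm.degree_mul, hGdeg]
    exact add_le_add hcon le_rfl
  have heq : s' * G = 1 - r' * F := by linear_combination hbez'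
  have hup : (s' * G).degree < f.degree + g.degree := by
    rw [heq]
    refine lt_of_le_of_lt (Polynomial.degree_sub_le _ _) (max_lt ?_ ?_)
    · calc (1 : Polynomial (ZMod (p ^ n))).degree ≤ 0 := Polynomial.degree_one_le
        _ < 1 + 1 := by norm_num
        _ ≤ f.degree + g.degree := add_le_add hfdeg1 hgdeg1
    · rw [hFm.degree_mul, hFdeg, add_comm f.degree g.degree]
      exact WithBot.add_lt_add_right hfne hr'deg
  exact absurd (lt_of_le_of_lt hkey hup) (lt_irrefl _)
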